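/- The graph of the translation function gtr : GExp⁻ → StExp is a bisimulation of labelled transition systems between grph_*(GExp⁻, ∂) and (StExp, τ); consequently, two skip-free GKAT expressions are bisimilar iff their translations are bisimilar one-free star expressions. -/

import Mathlib

variable {At : Type} {Act : Type} {X : Type} {Y : Type} {Z : Type}

/-- Skip-free GKAT expressions; tests are represented as Boolean predicates on atoms. -/
inductive GExp (At Act : Type) : Type
  | zero : GExp At Act
  | act : Act → GExp At Act
  | add : (At → Bool) → GExp At Act → GExp At Act → GExp At Act
  | seq : GExp At Act → GExp At Act → GExp At Act
  | loop : (At → Bool) → GExp At Act → GExp At Act → GExp At Act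

/-- The Brzozowski-style small-step semantics (derivative) of skip-free GKAT expressions.
`none` is the failure output ⊥, `some (p, none)` is acceptance with action `p`,
and `some (p, some e')` is a transition to `e'` with action `p`. -/
def gderiv : GExp At Act → At → Option (Act × Option (GExp At Act))
  | .zero, _ => none
  | .act p, _ => some (p, none)
  | .add b e f, α => if b α then gderiv e α else gderiv f α
  | .seq e f, α =>
      match gderiv e α with
      | none => none
      | some (p, none) => some (p, some f)
      | some (p, some e') => some (p, some (.seq e' f))
  | .loop b e f, α =>
      if b α then
        match gderiv e α with
        | none => none
        | some (p, none) => some (p, some (.loop b e f))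
        | some (p, some e') => some (p, some (.seq e' (.loop b e f)))
      else gderiv f α

/-- A skip-free automaton structure on `X`. -/
abbrev SFA (At Act X : Type) := X → At → Option (Act × Option X)

/-- Acceptance of a guarded trace (a nonempty list of atom/action pairs) from a state. -/
inductive Accepts (h : SFA At Act X) : X → List (At × Act) → Prop
  | last {x α p} : h x α = some (p, none) → Accepts h x [(α, p)]
  | step {x α p x' w} : h x α = some (p, some x') → Accepts h x' w →
      Accepts h x ((α, p) :: w)

/-- The language of guarded traces accepted by a state of a skip-free automaton. -/
def Lang (h : SFA At Act X) (x : X) : Set (List (At × Act)) := {w | Accepts h x w}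

/-- Bisimulations between skip-free automata. -/
def IsSFBisim (h : SFA At Act X) (k : SFA At Act Y) (R : X → Y → Prop) : Prop :=
  ∀ ⦃x y⦄, R x y → ∀ α : At,
    (h x α = none ↔ k y α = none) ∧
    (∀ p : Act, h x α = some (p, none) ↔ k y α = some (p, none)) ∧
    (∀ (p : Act) (x' : X), h x α = some (p, some x') →
      ∃ y' : Y, k y α = some (p, some y') ∧ R x' y')

/-- Bisimilarity of states of skip-free automata. -/
def SFBisimilar (h : SFA At Act X) (k : SFA At Act Y) (x : X) (y : Y) : Prop :=
  ∃ R, IsSFBisim h k R ∧ R x y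

/-- A labelled transition system over labels `At × Act` with termination `✓` (`none`). -/
abbrev LTS (At Act X : Type) := X → Set ((At × Act) × Option X)

/-- Bisimulations between labelled transition systems. -/
def IsLTSBisim (t : LTS At Act X) (u : LTS At Act Y) (R : X → Y → Prop) : Prop :=
  ∀ ⦃x y⦄, R x y → ∀ a : At × Act,
    ((a, (none : Option X)) ∈ t x ↔ (a, (none : Option Y)) ∈ u y) ∧
    (∀ x' : X, (a, some x') ∈ t x → ∃ y' : Y, (a, some y') ∈ u y ∧ R x' y') ∧
    (∀ y' : Y, (a, some y') ∈ u y → ∃ x' : X, (a, some x') ∈ t x ∧ R x' y')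

/-- Bisimilarity of states of labelled transition systems. -/
def LTSBisimilar (t : LTS At Act X) (u : LTS At Act Y) (x : X) (y : Y) : Prop :=
  ∃ R, IsLTSBisim t u R ∧ R x y

/-- The transformation of a skip-free automaton into a labelled transition system. -/
def grph (h : SFA At Act X) : LTS At Act X :=
  fun x => {z | h x z.1.1 = some (z.1.2, z.2)}

/-- A set of labelled transitions is graph-like if it assigns at most one outcome per atom. -/
def GraphLike (U : Set ((At × Act) × Option X)) : Prop :=
  ∀ (α : At) (p q : Act) (ξ ζ : Option X),
    ((α, p), ξ) ∈ U → ((α, q), ζ) ∈ U → p = q ∧ ξ = ζ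

/-- One-free star expressions over the alphabet `At · Act`. -/
inductive StExp (At Act : Type) : Type
  | zero : StExp At Act
  | atom : At → Act → StExp At Act
  | add : StExp At Act → StExp At Act → StExp At Act
  | seq : StExp At Act → StExp At Act → StExp At Act
  | star : StExp At Act → StExp At Act → StExp At Act

/-- The small-step labelled transition system of one-free star expressions. -/
def tau : LTS At Act (StExp At Act)
  | .zero => ∅
  | .atom α p => {((α, p), none)}
  | .add r s => tau r ∪ tau s
  | .seq r s =>
      {z | ∃ a r', (a, some r') ∈ tau r ∧ z = (a, some (StExp.seq r' s))} ∪
      {z | ∃ a, (a, none) ∈ tau r ∧ z = (a, some s)}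
  | .star r s =>
      {z | ∃ a r', (a, some r') ∈ tau r ∧ z = (a, some (StExp.seq r' (StExp.star r s)))} ∪
      {z | ∃ a, (a, none) ∈ tau r ∧ z = (a, some (StExp.star r s))} ∪
      tau s

/-- Restriction `b · r` of a one-free star expression to initial atoms satisfying `b`. -/
def bdot (b : At → Bool) : StExp At Act → StExp At Act
  | .zero => .zero
  | .atom α p => if b α then .atom α p else .zero
  | .add r s => .add (bdot b r) (bdot b s)
  | .seq r s => .seq (bdot b r) s
  | .star r s => .add (.seq (bdot b r) (.star r s)) (bdot b s)

/-- Sum of a list of one-free star expressions. -/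
def sumList : List (StExp At Act) → StExp At Act
  | [] => .zero
  | r :: rs => .add r (sumList rs)

/-- The translation of skip-free GKAT expressions into one-free star expressions. -/
noncomputable def gtr [Fintype At] : GExp At Act → StExp At Act
  | .zero => .zero
  | .act p => sumList (((Finset.univ : Finset At).toList).map fun α => .atom α p)
  | .add b e f => .add (bdot b (gtr e)) (bdot (fun α => !b α) (gtr f))
  | .seq e f => .seq (gtr e) (gtr f)
  | .loop b e f => .star (bdot b (gtr e)) (bdot (fun α => !b α) (gtr f))

lemma mem_tau_bdot {b : At → Bool} {r : StExp At Act} {z} :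
    z ∈ tau (bdot b r) ↔ z ∈ tau r ∧ b z.1.1 = true := by
  induction r generalizing z with
  | zero => simp [bdot, tau]
  | atom α p =>
    by_cases h : b α <;> simp only [bdot, h, if_true, if_false, tau] <;>
      constructor
    · rintro hz; rcases hz with rfl; exact ⟨rfl, h⟩
    · rintro ⟨hz, _⟩; exact hz
    · rintro hz; exact absurd hz (by simp [tau])
    · rintro ⟨hz, hb⟩; rcases hz with rfl; simp [h] at hb
  | add r s ihr ihs =>
    simp only [bdot, tau, Set.mem_union, ihr, ihs]; tauto
  | seq r s ihr ihs =>
    simp only [bdot, tau, Set.mem_union, Set.mem_setOf_eq, ihr]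
    constructor
    · rintro (⟨a, r', ⟨h1, h2⟩, rfl⟩ | ⟨a, ⟨h1, h2⟩, rfl⟩)
      · exact ⟨Or.inl ⟨a, r', h1, rfl⟩, h2⟩
      · exact ⟨Or.inr ⟨a, h1, rfl⟩, h2⟩
    · rintro ⟨(⟨a, r', h1, rfl⟩ | ⟨a, h1, rfl⟩), h2⟩
      · exact Or.inl ⟨a, r', ⟨h1, h2⟩, rfl⟩
      · exact Or.inr ⟨a, ⟨h1, h2⟩, rfl⟩
  | star r s ihr ihs =>
    simp only [bdot, tau, Set.mem_union, Set.mem_setOf_eq, ihr, ihs]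
    constructor
    · rintro ((⟨a, r', ⟨h1, h2⟩, rfl⟩ | ⟨a, ⟨h1, h2⟩, rfl⟩) | ⟨h1, h2⟩)
      · exact ⟨Or.inl (Or.inl ⟨a, r', h1, rfl⟩), h2⟩
      · exact ⟨Or.inl (Or.inr ⟨a, h1, rfl⟩), h2⟩
      · exact ⟨Or.inr h1, h2⟩
    · rintro ⟨((⟨a, r', h1, rfl⟩ | ⟨a, h1, rfl⟩) | h1), h2⟩
      · exact Or.inl (Or.inl ⟨a, r', ⟨h1, h2⟩, rfl⟩)
      · exact Or.inl (Or.inr ⟨a, ⟨h1, h2⟩, rfl⟩)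
      · exact Or.inr ⟨h1, h2⟩

lemma mem_tau_sumList {l : List (StExp At Act)} {z} :
    z ∈ tau (sumList l) ↔ ∃ r ∈ l, z ∈ tau r := by
  induction l with
  | nil => simp [sumList, tau]
  | cons r rs ih => simp only [sumList, tau, Set.mem_union, ih, List.mem_cons]; aesop

lemma key [Fintype At] (e : GExp At Act) :
    ∀ (α : At) (p : Act) (ζ : Option (StExp At Act)),
      ((α, p), ζ) ∈ tau (gtr e) ↔
        ∃ ξ, gderiv e α = some (p, ξ) ∧ ζ = Option.map gtr ξ := by
  induction e with
  | zero => intro α p ζ; simp [gtr, tau, gderiv]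
  | act q =>
    intro α p ζ
    simp only [gtr, mem_tau_sumList, List.mem_map, gderiv]
    constructor
    · rintro ⟨r, ⟨β, -, rfl⟩, hz⟩
      simp only [tau, Set.mem_singleton_iff, Prod.mk.injEq] at hz
      obtain ⟨⟨rfl, rfl⟩, rfl⟩ := hz
      exact ⟨none, rfl, rfl⟩
    · rintro ⟨ξ, hξ, rfl⟩
      obtain ⟨rfl, rfl⟩ : q = p ∧ (none : Option (GExp At Act)) = ξ := by
        simpa [Prod.ext_iff] using hξ
      exact ⟨.atom α q, ⟨α, Finset.mem_toList.2 (Finset.mem_univ α), rfl⟩, by simp [tau]⟩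
  | add b e f ihe ihf =>
    intro α p ζ
    by_cases h : b α <;>
      simp [gtr, tau, mem_tau_bdot, gderiv, h, ihe, ihf]
  | seq e f ihe ihf =>
    intro α p ζ
    simp only [gtr, tau, Set.mem_union, Set.mem_setOf_eq, gderiv]
    rcases h : gderiv e α with _ | ⟨q, (_ | e')⟩
    · constructor
      · rintro (⟨a, r', h1, heq⟩ | ⟨a, h1, heq⟩)
        · obtain ⟨rfl, -⟩ : a = (α, p) ∧ ζ = some (r'.seq (gtr f)) := by
            simpa [Prod.ext_iff, eq_comm] using heq
          obtain ⟨ξ, hξ, -⟩ := (ihe α p (some r')).1 h1; simp [h] at hξ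
        · obtain ⟨rfl, -⟩ : a = (α, p) ∧ ζ = some (gtr f) := by
            simpa [Prod.ext_iff, eq_comm] using heq
          obtain ⟨ξ, hξ, -⟩ := (ihe α p none).1 h1; simp [h] at hξ
      · rintro ⟨ξ, hξ, -⟩; simp at hξ
    · constructor
      · rintro (⟨a, r', h1, heq⟩ | ⟨a, h1, heq⟩)
        · obtain ⟨rfl, rfl⟩ : a = (α, p) ∧ ζ = some (r'.seq (gtr f)) := by
            simpa [Prod.ext_iff, eq_comm] using heq
          obtain ⟨ξ, hξ, hmap⟩ := (ihe α p (some r')).1 h1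
          rw [h] at hξ; obtain ⟨rfl, rfl⟩ : q = p ∧ (none : Option (GExp At Act)) = ξ := by
            simpa [Prod.ext_iff] using hξ
          simp at hmap
        · obtain ⟨rfl, rfl⟩ : a = (α, p) ∧ ζ = some (gtr f) := by
            simpa [Prod.ext_iff, eq_comm] using heq
          obtain ⟨ξ, hξ, -⟩ := (ihe α p none).1 h1
          rw [h] at hξ; obtain ⟨rfl, rfl⟩ : q = p ∧ (none : Option (GExp At Act)) = ξ := by
            simpa [Prod.ext_iff] using hξ
          exact ⟨some f, rfl, rfl⟩
      · rintro ⟨ξ, hξ, rfl⟩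
        obtain ⟨rfl, rfl⟩ : q = p ∧ (some f : Option (GExp At Act)) = ξ := by
          simpa [Prod.ext_iff] using hξ
        refine Or.inr ⟨(α, q), ?_, rfl⟩
        exact (ihe α q none).2 ⟨none, h, rfl⟩
    · constructor
      · rintro (⟨a, r', h1, heq⟩ | ⟨a, h1, heq⟩)
        · obtain ⟨rfl, rfl⟩ : a = (α, p) ∧ ζ = some (r'.seq (gtr f)) := by
            simpa [Prod.ext_iff, eq_comm] using heq
          obtain ⟨ξ, hξ, hmap⟩ := (ihe α p (some r')).1 h1
          rw [h] at hξ; obtain ⟨rfl, rfl⟩ : q = p ∧ (some e' : Option (GExp At Act)) = ξ := by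
            simpa [Prod.ext_iff] using hξ
          obtain rfl : r' = gtr e' := by simpa using hmap
          exact ⟨some (e'.seq f), rfl, by simp [gtr]⟩
        · obtain ⟨rfl, rfl⟩ : a = (α, p) ∧ ζ = some (gtr f) := by
            simpa [Prod.ext_iff, eq_comm] using heq
          obtain ⟨ξ, hξ, hmap⟩ := (ihe α p none).1 h1
          rw [h] at hξ; obtain ⟨-, rfl⟩ : q = p ∧ (some e' : Option (GExp At Act)) = ξ := by
            simpa [Prod.ext_iff] using hξ
          simp at hmap
      · rintro ⟨ξ, hξ, rfl⟩
        obtain ⟨rfl, rfl⟩ : q = p ∧ (some (e'.seq f) : Option (GExp At Act)) = ξ := by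
          simpa [Prod.ext_iff] using hξ
        refine Or.inl ⟨(α, q), gtr e', ?_, by simp [gtr]⟩
        exact (ihe α q (some (gtr e'))).2 ⟨some e', h, rfl⟩
  | loop b e f ihe ihf =>
    intro α p ζ
    by_cases hb : b α
    · simp only [gtr, tau, Set.mem_union, Set.mem_setOf_eq, gderiv, hb, if_true]
      have hs : ∀ (a : At × Act) (ζ' : Option (StExp At Act)),
          (a, ζ') ∈ tau (bdot (fun α => !b α) (gtr f)) → a.1 = α → False := by
        rintro a ζ' hm rfl
        have := mem_tau_bdot.1 hm
        simp [hb] at this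
      rcases h : gderiv e α with _ | ⟨q, (_ | e')⟩
      · constructor
        · rintro ((⟨a, r', h1, heq⟩ | ⟨a, h1, heq⟩) | h1)
          · obtain ⟨rfl, -⟩ : a = (α, p) ∧
                ζ = some (r'.seq ((bdot b (gtr e)).star (bdot (fun α => !b α) (gtr f)))) := by
              simpa [Prod.ext_iff, eq_comm] using heq
            obtain ⟨hm, -⟩ := mem_tau_bdot.1 h1
            obtain ⟨ξ, hξ, -⟩ := (ihe α p (some r')).1 hm
            simp [h] at hξ
          · obtain ⟨rfl, -⟩ : a = (α, p) ∧
                ζ = some ((bdot b (gtr e)).star (bdot (fun α => !b α) (gtr f))) := by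
              simpa [Prod.ext_iff, eq_comm] using heq
            obtain ⟨hm, -⟩ := mem_tau_bdot.1 h1
            obtain ⟨ξ, hξ, -⟩ := (ihe α p none).1 hm
            simp [h] at hξ
          · exact (hs _ _ h1 rfl).elim
        · rintro ⟨ξ, hξ, -⟩; simp at hξ
      · constructor
        · rintro ((⟨a, r', h1, heq⟩ | ⟨a, h1, heq⟩) | h1)
          · obtain ⟨rfl, rfl⟩ : a = (α, p) ∧
                ζ = some (r'.seq ((bdot b (gtr e)).star (bdot (fun α => !b α) (gtr f)))) := by
              simpa [Prod.ext_iff, eq_comm] using heq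
            obtain ⟨⟨ξ, hξ, hmap⟩, -⟩ := mem_tau_bdot.1 h1 |>.imp (ihe α p (some r')).1 id
            rw [h] at hξ
            obtain ⟨rfl, rfl⟩ : q = p ∧ (none : Option (GExp At Act)) = ξ := by
              simpa [Prod.ext_iff] using hξ
            simp at hmap
          · obtain ⟨rfl, rfl⟩ : a = (α, p) ∧
                ζ = some ((bdot b (gtr e)).star (bdot (fun α => !b α) (gtr f))) := by
              simpa [Prod.ext_iff, eq_comm] using heq
            obtain ⟨⟨ξ, hξ, -⟩, -⟩ := mem_tau_bdot.1 h1 |>.imp (ihe α p none).1 id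
            rw [h] at hξ
            obtain ⟨rfl, rfl⟩ : q = p ∧ (none : Option (GExp At Act)) = ξ := by
              simpa [Prod.ext_iff] using hξ
            exact ⟨some (.loop b e f), rfl, by simp [gtr]⟩
          · exact (hs _ _ h1 rfl).elim
        · rintro ⟨ξ, hξ, rfl⟩
          obtain ⟨rfl, rfl⟩ : q = p ∧ (some (GExp.loop b e f) : Option (GExp At Act)) = ξ := by
            simpa [Prod.ext_iff] using hξ
          refine Or.inl (Or.inr ⟨(α, q), ?_, by simp [gtr]⟩)
          exact mem_tau_bdot.2 ⟨(ihe α q none).2 ⟨none, h, rfl⟩, hb⟩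
      · constructor
        · rintro ((⟨a, r', h1, heq⟩ | ⟨a, h1, heq⟩) | h1)
          · obtain ⟨rfl, rfl⟩ : a = (α, p) ∧
                ζ = some (r'.seq ((bdot b (gtr e)).star (bdot (fun α => !b α) (gtr f)))) := by
              simpa [Prod.ext_iff, eq_comm] using heq
            obtain ⟨⟨ξ, hξ, hmap⟩, -⟩ := mem_tau_bdot.1 h1 |>.imp (ihe α p (some r')).1 id
            rw [h] at hξ
            obtain ⟨rfl, rfl⟩ : q = p ∧ (some e' : Option (GExp At Act)) = ξ := by
              simpa [Prod.ext_iff] using hξ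
            obtain rfl : r' = gtr e' := by simpa using hmap
            exact ⟨some (.seq e' (.loop b e f)), rfl, by simp [gtr]⟩
          · obtain ⟨rfl, rfl⟩ : a = (α, p) ∧
                ζ = some ((bdot b (gtr e)).star (bdot (fun α => !b α) (gtr f))) := by
              simpa [Prod.ext_iff, eq_comm] using heq
            obtain ⟨⟨ξ, hξ, hmap⟩, -⟩ := mem_tau_bdot.1 h1 |>.imp (ihe α p none).1 id
            rw [h] at hξ
            obtain ⟨-, rfl⟩ : q = p ∧ (some e' : Option (GExp At Act)) = ξ := by
              simpa [Prod.ext_iff] using hξ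
            simp at hmap
          · exact (hs _ _ h1 rfl).elim
        · rintro ⟨ξ, hξ, rfl⟩
          obtain ⟨rfl, rfl⟩ : q = p ∧
              (some (GExp.seq e' (.loop b e f)) : Option (GExp At Act)) = ξ := by
            simpa [Prod.ext_iff] using hξ
          refine Or.inl (Or.inl ⟨(α, q), gtr e', ?_, by simp [gtr]⟩)
          exact mem_tau_bdot.2 ⟨(ihe α q (some (gtr e'))).2 ⟨some e', h, rfl⟩, hb⟩
    · simp only [gtr, tau, Set.mem_union, Set.mem_setOf_eq, gderiv, hb, if_false]
      constructor
      · rintro ((⟨a, r', h1, heq⟩ | ⟨a, h1, heq⟩) | h1)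
        · obtain ⟨rfl, -⟩ : a = (α, p) ∧
              ζ = some (r'.seq ((bdot b (gtr e)).star (bdot (fun α => !b α) (gtr f)))) := by
            simpa [Prod.ext_iff, eq_comm] using heq
          have := mem_tau_bdot.1 h1; simp [hb] at this
        · obtain ⟨rfl, -⟩ : a = (α, p) ∧
              ζ = some ((bdot b (gtr e)).star (bdot (fun α => !b α) (gtr f))) := by
            simpa [Prod.ext_iff, eq_comm] using heq
          have := mem_tau_bdot.1 h1; simp [hb] at this
        · have := mem_tau_bdot.1 h1
          exact (ihf α p ζ).1 this.1
      · rintro h1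
        refine Or.inr (mem_tau_bdot.2 ⟨(ihf α p ζ).2 h1, by simp [hb]⟩)

/-- the graph of `gtr` is an LTS bisimulation between `grph_*(GExp⁻, ∂)` and
`(StExp, τ)`; consequently, skip-free GKAT expressions are bisimilar iff their
translations are bisimilar one-free star expressions. -/
theorem gtr_graph_bisim [Fintype At] :
    IsLTSBisim (grph (gderiv (At := At) (Act := Act))) tau (fun e r => r = gtr e) ∧
    (∀ e₁ e₂ : GExp At Act,
      LTSBisimilar (grph gderiv) (grph gderiv) e₁ e₂ ↔
        LTSBisimilar tau tau (gtr e₁) (gtr e₂)) := by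
  have key_none : ∀ (e : GExp At Act) (α : At) (p : Act),
      ((α, p), (none : Option (StExp At Act))) ∈ tau (gtr e) ↔
        gderiv e α = some (p, none) := by
    intro e α p
    rw [key]
    constructor
    · rintro ⟨ξ, hξ, hm⟩
      cases ξ with
      | none => exact hξ
      | some _ => simp at hm
    · intro h; exact ⟨none, h, rfl⟩
  have key_fwd : ∀ (e e' : GExp At Act) (α : At) (p : Act),
      gderiv e α = some (p, some e') →
        ((α, p), some (gtr e')) ∈ tau (gtr e) := by
    intro e e' α p h
    exact (key e α p (some (gtr e'))).2 ⟨some e', h, rfl⟩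
  have key_bwd : ∀ (e : GExp At Act) (r' : StExp At Act) (α : At) (p : Act),
      ((α, p), some r') ∈ tau (gtr e) →
        ∃ e', gderiv e α = some (p, some e') ∧ r' = gtr e' := by
    intro e r' α p h
    obtain ⟨ξ, hξ, hm⟩ := (key e α p (some r')).1 h
    cases ξ with
    | none => simp at hm
    | some e' => exact ⟨e', hξ, by simpa using hm⟩
  have main : IsLTSBisim (grph (gderiv (At := At) (Act := Act))) tau
      (fun e r => r = gtr e) := by
    rintro e r rfl ⟨α, p⟩
    refine ⟨?_, ?_, ?_⟩
    · show gderiv e α = some (p, none) ↔ _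
      exact (key_none e α p).symm
    · intro e' he'
      exact ⟨gtr e', key_fwd e e' α p he', rfl⟩
    · intro r' hr'
      obtain ⟨e', he', rfl⟩ := key_bwd e r' α p hr'
      exact ⟨e', he', rfl⟩
  refine ⟨main, fun e₁ e₂ => ⟨?_, ?_⟩⟩
  · rintro ⟨R, hR, h12⟩
    refine ⟨fun r s => ∃ a b, r = gtr a ∧ s = gtr b ∧ R a b,
      ?_, e₁, e₂, rfl, rfl, h12⟩
    rintro r s ⟨a, b, rfl, rfl, hab⟩ ⟨α, p⟩
    obtain ⟨hterm, hstep, hstep'⟩ := hR hab (α, p)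
    refine ⟨?_, ?_, ?_⟩
    · rw [key_none, key_none]
      exact hterm
    · intro r' hr'
      obtain ⟨a', ha', rfl⟩ := key_bwd a r' α p hr'
      obtain ⟨b', hb', hab'⟩ := hstep a' ha'
      exact ⟨gtr b', key_fwd b b' α p hb', a', b', rfl, rfl, hab'⟩
    · intro s' hs'
      obtain ⟨b', hb', rfl⟩ := key_bwd b s' α p hs'
      obtain ⟨a', ha', hab'⟩ := hstep' b' hb'
      exact ⟨gtr a', key_fwd a a' α p ha', a', b', rfl, rfl, hab'⟩
  · rintro ⟨S, hS, h12⟩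
    refine ⟨fun a b => S (gtr a) (gtr b), ?_, h12⟩
    rintro a b hab ⟨α, p⟩
    obtain ⟨hterm, hstep, hstep'⟩ := hS hab (α, p)
    refine ⟨?_, ?_, ?_⟩
    · show gderiv a α = some (p, none) ↔ gderiv b α = some (p, none)
      rw [← key_none, ← key_none]
      exact hterm
    · intro a' ha'
      obtain ⟨s', hs', hSs⟩ := hstep (gtr a') (key_fwd a a' α p ha')
      obtain ⟨b', hb', rfl⟩ := key_bwd b s' α p hs'
      exact ⟨b', hb', hSs⟩
    · intro b' hb'
      obtain ⟨r', hr', hSr⟩ := hstep' (gtr b') (key_fwd b b' α p hb')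
      obtain ⟨a', ha', rfl⟩ := key_bwd a r' α p hr'
      exact ⟨a', ha', hSr⟩
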